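/- There exist a finite set Π of pairs (j,r) with j ∈ F and r an integer satisfying ρ_min ≤ r ≤ ρ_max, a designated root pair (j₀, ρ_max) ∈ Π, a map parent : Π → Π, and a family of areas A : Π → Set V, with the following properties. (1) parent(j₀,ρ_max) = (j₀,ρ_max), and every non-root (j,r) ∈ Π satisfies parent(j,r) = (j',r+1) for some (j',r+1) ∈ Π with B(j,7·5^r) ⊆ B(j',7·5^{r+1}); consequently every pair reaches the root in at most ρ_max − ρ_min parent steps, and every pair has at most 2^{4κ} children (pairs of which it is the parent). (2) A(j,r) ⊆ B(j,7·5^r) for all (j,r) ∈ Π, A(u) ⊆ A(parent(u)) for all u ∈ Π, and for any two pairs u,v ∈ Π neither of which is an iterated-parent ancestor of the other, A(u) ∩ A(v) = ∅; in particular the family {A(u)}_{u∈Π} is laminar. (3) For every client set C ⊆ V and every finite collection 𝔅 of pairs (j,R) with j ∈ F and R ≥ 0 whose closed balls B(j,R) cover C, there exists S ⊆ Π with C ⊆ ⋃_{(j,r)∈S} A(j,r) and Σ_{(j,r)∈S} (f_j + 7·5^r) ≤ 80·2^{2κ} · Σ_{(j,R)∈𝔅} (f_j + R). -/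

import Mathlib

open Metric

lemma cover_iter {V : Type*} [MetricSpace V] {κ : ℕ}
    (hdoub : ∀ (x : V) (R : ℝ), 0 < R → ∃ T : Finset V, T.card ≤ 2 ^ κ ∧
      closedBall x R ⊆ ⋃ y ∈ T, closedBall y (R / 2))
    (k : ℕ) (x : V) (R : ℝ) (hR : 0 < R) :
    ∃ T : Finset V, T.card ≤ 2 ^ (k * κ) ∧
      closedBall x R ⊆ ⋃ y ∈ T, closedBall y (R / 2 ^ k) := by
  classical
  induction k with
  | zero => exact ⟨{x}, by simp, by simp⟩
  | succ k ih =>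
    obtain ⟨T, hcard, hcov⟩ := ih
    have hpos : 0 < R / 2 ^ k := by positivity
    choose T' hT'card hT'cov using fun y : V => hdoub y (R / 2 ^ k) hpos
    refine ⟨T.biUnion T', ?_, ?_⟩
    · calc (T.biUnion T').card ≤ ∑ y ∈ T, (T' y).card := Finset.card_biUnion_le
        _ ≤ ∑ _y ∈ T, 2 ^ κ := Finset.sum_le_sum fun y _ => hT'card y
        _ = T.card * 2 ^ κ := by rw [Finset.sum_const, smul_eq_mul]
        _ ≤ 2 ^ (k * κ) * 2 ^ κ := Nat.mul_le_mul_right _ hcard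
        _ = 2 ^ ((k + 1) * κ) := by rw [← pow_add]; ring_nf
    · intro z hz
      obtain ⟨y, hy, hzy⟩ := Set.mem_iUnion₂.1 (hcov hz)
      obtain ⟨w, hw, hzw⟩ := Set.mem_iUnion₂.1 (hT'cov y hzy)
      refine Set.mem_iUnion₂.2 ⟨w, Finset.mem_biUnion.2 ⟨y, hy, hw⟩, ?_⟩
      have : R / 2 ^ k / 2 = R / 2 ^ (k + 1) := by ring
      rwa [this] at hzw

lemma packing {V : Type*} [MetricSpace V] {κ : ℕ}
    (hdoub : ∀ (x : V) (R : ℝ), 0 < R → ∃ T : Finset V, T.card ≤ 2 ^ κ ∧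
      closedBall x R ⊆ ⋃ y ∈ T, closedBall y (R / 2))
    (k : ℕ) (c : V) (R : ℝ) (hR : 0 < R) (T : Finset V)
    (hT : ∀ p ∈ T, dist p c ≤ R)
    (hsep : ∀ p ∈ T, ∀ q ∈ T, p ≠ q → 2 * (R / 2 ^ k) < dist p q) :
    T.card ≤ 2 ^ (k * κ) := by
  classical
  obtain ⟨Y, hYcard, hYcov⟩ := cover_iter hdoub k c R hR
  have hmap : ∀ p ∈ T, ∃ y ∈ Y, dist p y ≤ R / 2 ^ k := by
    intro p hp
    have : p ∈ ⋃ y ∈ Y, closedBall y (R / 2 ^ k) := hYcov (mem_closedBall.2 (hT p hp))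
    obtain ⟨y, hy, hpy⟩ := Set.mem_iUnion₂.1 this
    exact ⟨y, hy, mem_closedBall.1 hpy⟩
  choose g hg1 hg2 using hmap
  have hinj : ∀ (p : V) (hp : p ∈ T) (q : V) (hq : q ∈ T), g p hp = g q hq → p = q := by
    intro p hp q hq hgeq
    by_contra hne
    have h1 := hg2 p hp
    have h2 := hg2 q hq
    have : dist p q ≤ 2 * (R / 2 ^ k) := by
      calc dist p q ≤ dist p (g p hp) + dist q (g q hq) := by
            rw [hgeq]; exact dist_triangle_right _ _ _
        _ ≤ 2 * (R / 2 ^ k) := by linarith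
    exact absurd (hsep p hp q hq hne) (not_lt.2 this)
  calc T.card ≤ Y.card := by
        apply Finset.card_le_card_of_injOn (fun p => if h : p ∈ T then g p h else c)
        · intro p hp; have hp' : p ∈ T := hp; simp only [dif_pos hp']; exact hg1 p hp'
        · intro p hp q hq h
          simp only [Finset.mem_coe] at hp hq
          simp only [dif_pos hp, dif_pos hq] at h
          exact hinj p hp q hq h
    _ ≤ 2 ^ (k * κ) := hYcard

lemma exists_net {V : Type*} [MetricSpace V] (F' : Finset V) (s : ℝ) (hs : 0 ≤ s) :
    ∃ N : Finset V, N ⊆ F' ∧ (∀ p ∈ N, ∀ q ∈ N, p ≠ q → s < dist p q) ∧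
      ∀ j ∈ F', ∃ p ∈ N, dist j p ≤ s := by
  classical
  set good : Finset V → Prop :=
    fun N => N ⊆ F' ∧ ∀ p ∈ N, ∀ q ∈ N, p ≠ q → s < dist p q with hgood
  have h0 : good ∅ := ⟨Finset.empty_subset _, by simp⟩
  set cand : Finset (Finset V) := F'.powerset.filter good with hcand
  have hne : cand.Nonempty := ⟨∅, Finset.mem_filter.2 ⟨Finset.empty_mem_powerset _, h0⟩⟩
  obtain ⟨N, hNmem, hNmax⟩ := cand.exists_max_image Finset.card hne
  have hNmem' := Finset.mem_filter.1 hNmem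
  have hNsub : N ⊆ F' := hNmem'.2.1
  have hNsep := hNmem'.2.2
  refine ⟨N, hNsub, hNsep, ?_⟩
  intro j hj
  by_contra hno
  push_neg at hno
  have hjN : j ∉ N := fun h => absurd (hno j h) (by simp [dist_self, hs, not_lt])
  have hins : good (insert j N) := by
    constructor
    · exact Finset.insert_subset hj hNsub
    · intro p hp q hq hpq
      rcases Finset.mem_insert.1 hp with h1 | h1
      · rcases Finset.mem_insert.1 hq with h2 | h2
        · exact absurd (h1.trans h2.symm) hpq
        · subst h1; exact hno q h2
      · rcases Finset.mem_insert.1 hq with h2 | h2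
        · subst h2; rw [dist_comm]; exact hno p h1
        · exact hNsep p h1 q h2 hpq
  have : insert j N ∈ cand := Finset.mem_filter.2
    ⟨Finset.mem_powerset.2 hins.1, hins⟩
  have := hNmax _ this
  rw [Finset.card_insert_of_notMem hjN] at this
  omega

lemma sum_biUnion_le' {α β : Type*} [DecidableEq β] (s : Finset α) (t : α → Finset β)
    (g : β → ℝ) (hg : ∀ a ∈ s, ∀ x ∈ t a, 0 ≤ g x) :
    ∑ x ∈ s.biUnion t, g x ≤ ∑ a ∈ s, ∑ x ∈ t a, g x := by
  classical
  induction s using Finset.induction with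
  | empty => simp
  | insert a s hx ih =>
    rw [Finset.biUnion_insert, Finset.sum_insert hx]
    have hga : ∀ x ∈ t a, 0 ≤ g x := fun x hxx => hg a (Finset.mem_insert_self a s) x hxx
    have hgs : ∀ b ∈ s, ∀ x ∈ t b, 0 ≤ g x :=
      fun b hb x hxx => hg b (Finset.mem_insert_of_mem hb) x hxx
    have ih' := ih hgs
    calc ∑ x ∈ t a ∪ s.biUnion t, g x ≤ ∑ x ∈ t a, g x + ∑ x ∈ s.biUnion t, g x := by
          have := Finset.sum_union_inter (s₁ := t a) (s₂ := s.biUnion t) (f := g)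
          have hnn : 0 ≤ ∑ x ∈ t a ∩ s.biUnion t, g x :=
            Finset.sum_nonneg fun x hxx => hga x (Finset.mem_of_mem_inter_left hxx)
          linarith
      _ ≤ _ := by linarith

lemma le_zpow_ceil_logb (M : ℝ) (hM : 0 < M) : M ≤ (5:ℝ)^(⌈Real.logb 5 M⌉) := by
  rw [show (5:ℝ)^(⌈Real.logb 5 M⌉) = (5:ℝ)^((⌈Real.logb 5 M⌉ : ℝ)) from
    (Real.rpow_intCast 5 _).symm]
  calc M = (5:ℝ)^(Real.logb 5 M) := (Real.rpow_logb (by norm_num) (by norm_num) hM).symm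
    _ ≤ _ := Real.rpow_le_rpow_of_exponent_le (by norm_num) (Int.le_ceil _)

lemma zpow_lt_of_lt_ceil {M : ℝ} (hM : 0 < M) {r : ℤ} (h : r < ⌈Real.logb 5 M⌉) :
    (5:ℝ)^r < M := by
  rw [show (5:ℝ)^r = (5:ℝ)^((r:ℤ):ℝ) from (Real.rpow_intCast 5 _).symm]
  calc (5:ℝ)^((r:ℤ):ℝ) < (5:ℝ)^(Real.logb 5 M) := by
        apply Real.rpow_lt_rpow_of_exponent_lt (by norm_num)
        exact_mod_cast Int.lt_ceil.1 h
    _ = M := Real.rpow_logb (by norm_num) (by norm_num) hM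



/-- Theorem `areas-structure`: existence of the set of pairs
`Π`, the root, the parent map (abstract tree `𝒯`) and the laminar family of
areas, with bounded height, bounded degree, nesting of balls, areas contained
in balls, laminarity, and the `O(2^(2κ))`-approximate covering property. -/
theorem stmt_6 {V : Type*} [MetricSpace V] (κ : ℕ)
    (hdoub : ∀ (x : V) (R : ℝ), 0 < R → ∃ T : Finset V, T.card ≤ 2 ^ κ ∧
      Metric.closedBall x R ⊆ ⋃ y ∈ T, Metric.closedBall y (R / 2))
    (W : ℝ) (hW : 0 < W) (hdiam : ∀ x y : V, dist x y ≤ W)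
    (F : Finset V) (hF : F.Nonempty)
    (f : V → ℝ) (hf : ∀ j ∈ F, 0 < f j)
    (fmin : ℝ) (hfmin : fmin = F.inf' hF f)
    (ρmin ρmax : ℤ)
    (hρmin : (5 : ℝ) ^ ρmin ≤ fmin ∧ ∀ r : ℤ, (5 : ℝ) ^ r ≤ fmin → r ≤ ρmin)
    (hρmax : W ≤ (5 : ℝ) ^ ρmax ∧ ∀ r : ℤ, W ≤ (5 : ℝ) ^ r → ρmax ≤ r)
    (hρ : ρmin ≤ ρmax) :
    ∃ (P : Finset (V × ℤ)) (j₀ : V) (parent : V × ℤ → V × ℤ)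
      (A : V × ℤ → Set V),
      (∀ u ∈ P, u.1 ∈ F ∧ ρmin ≤ u.2 ∧ u.2 ≤ ρmax) ∧
      (j₀, ρmax) ∈ P ∧
      -- (1) tree structure: root fixpoint, parent goes one level up with
      -- nesting of balls, height ≤ ρmax − ρmin, degree ≤ 2^(4κ)
      parent (j₀, ρmax) = (j₀, ρmax) ∧
      (∀ u ∈ P, u ≠ (j₀, ρmax) →
        parent u ∈ P ∧ (parent u).2 = u.2 + 1 ∧
        Metric.closedBall u.1 (7 * 5 ^ u.2) ⊆
          Metric.closedBall (parent u).1 (7 * 5 ^ (parent u).2)) ∧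
      (∀ u ∈ P, ∃ k : ℕ, k ≤ (ρmax - ρmin).toNat ∧
        parent^[k] u = (j₀, ρmax)) ∧
      (∀ u ∈ P, {w : V × ℤ | w ∈ P ∧ w ≠ u ∧ parent w = u}.ncard ≤ 2 ^ (4 * κ)) ∧
      -- (2) areas: contained in balls, monotone along parents, disjoint
      -- unless related by ancestry; in particular laminar
      (∀ u ∈ P, A u ⊆ Metric.closedBall u.1 (7 * 5 ^ u.2)) ∧
      (∀ u ∈ P, A u ⊆ A (parent u)) ∧
      (∀ u ∈ P, ∀ v ∈ P, (¬ ∃ m : ℕ, parent^[m] v = u) →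
        (¬ ∃ m : ℕ, parent^[m] u = v) → A u ∩ A v = ∅) ∧
      (∀ u ∈ P, ∀ v ∈ P, A u ∩ A v = ∅ ∨ A u ⊆ A v ∨ A v ⊆ A u) ∧
      -- (3) approximate covering by areas
      (∀ (C : Set V) (𝔅 : Finset (V × ℝ)),
        (∀ b ∈ 𝔅, b.1 ∈ F ∧ 0 ≤ b.2) →
        (C ⊆ ⋃ b ∈ 𝔅, Metric.closedBall b.1 b.2) →
        ∃ S : Finset (V × ℤ), S ⊆ P ∧ (C ⊆ ⋃ u ∈ S, A u) ∧
          ∑ u ∈ S, (f u.1 + 7 * 5 ^ u.2) ≤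
            80 * 2 ^ (2 * κ) * ∑ b ∈ 𝔅, (f b.1 + b.2)) := by
  classical
  obtain ⟨j₀, hj₀F, hj₀⟩ := Finset.exists_mem_eq_inf' hF f
  have hfj₀ : f j₀ = fmin := by rw [hfmin, hj₀]
  have hfminle : ∀ j ∈ F, fmin ≤ f j := fun j hj => hfmin ▸ Finset.inf'_le f hj
  have hfminpos : 0 < fmin := hfj₀ ▸ hf j₀ hj₀F
  have hfminlt : fmin < 5 ^ (ρmin + 1) := by
    by_contra h
    push_neg at h
    have := hρmin.2 (ρmin + 1) h
    omega
  have h5pos : ∀ r : ℤ, (0:ℝ) < 5 ^ r := fun r => by positivity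
  have h5mono : ∀ {r s : ℤ}, r ≤ s → (5:ℝ) ^ r ≤ 5 ^ s :=
    fun h => zpow_le_zpow_right₀ (by norm_num) h
  have h5succ : ∀ r : ℤ, (5:ℝ) ^ (r + 1) = 5 * 5 ^ r := fun r => by
    rw [zpow_add_one₀ (by norm_num)]; ring
  set Fr : ℤ → Finset V := fun r => F.filter (fun j => f j ≤ 5 ^ (r + 1)) with hFrdef
  have hnet0 : ∀ r : ℤ, ∃ N : Finset V, N ⊆ Fr r ∧
      (∀ p ∈ N, ∀ q ∈ N, p ≠ q → 4 * 5 ^ r < dist p q) ∧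
      ∀ j ∈ Fr r, ∃ p ∈ N, dist j p ≤ 4 * 5 ^ r := fun r =>
    exists_net (Fr r) (4 * 5 ^ r) (by positivity)
  choose N₀ hN₀sub hN₀sep hN₀cov using hnet0
  set N : ℤ → Finset V := fun r => if r < ρmax then N₀ r else {j₀} with hNdef
  have hNtop : ∀ r : ℤ, ρmax ≤ r → N r = {j₀} := fun r hr => by
    simp only [hNdef, if_neg (not_lt.2 hr)]
  have hj₀N : j₀ ∈ N ρmax := by rw [hNtop ρmax le_rfl]; exact Finset.mem_singleton_self _
  have hNsubF : ∀ r : ℤ, N r ⊆ F := by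
    intro r
    by_cases hr : r < ρmax
    · simp only [hNdef, if_pos hr]
      exact (hN₀sub r).trans (Finset.filter_subset _ _)
    · simp only [hNdef, if_neg hr]
      intro p hp
      rw [Finset.mem_singleton] at hp
      subst hp; exact hj₀F
  have hNf : ∀ r : ℤ, ∀ p ∈ N r, f p ≤ 5 ^ (r + 1) := by
    intro r p hp
    by_cases hr : r < ρmax
    · simp only [hNdef, if_pos hr] at hp
      exact (Finset.mem_filter.1 (hN₀sub r hp)).2
    · simp only [hNdef, if_neg hr] at hp
      rw [Finset.mem_singleton] at hp
      subst hp
      rw [hfj₀]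
      have h1 : (5:ℝ) ^ (ρmin + 1) ≤ 5 ^ (r + 1) := h5mono (by omega)
      linarith
  have hNsep : ∀ r : ℤ, ∀ p ∈ N r, ∀ q ∈ N r, p ≠ q → 4 * 5 ^ r < dist p q := by
    intro r p hp q hq hpq
    by_cases hr : r < ρmax
    · simp only [hNdef, if_pos hr] at hp hq
      exact hN₀sep r p hp q hq hpq
    · simp only [hNdef, if_neg hr, Finset.mem_singleton] at hp hq
      exact absurd (hp.trans hq.symm) hpq
  have hNcov : ∀ r : ℤ, ∀ j ∈ F, f j ≤ 5 ^ (r + 1) → ∃ p ∈ N r, dist j p ≤ 4 * 5 ^ r := by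
    intro r j hjF hjf
    by_cases hr : r < ρmax
    · simp only [hNdef, if_pos hr]
      exact hN₀cov r j (Finset.mem_filter.2 ⟨hjF, hjf⟩)
    · simp only [hNdef, if_neg hr]
      refine ⟨j₀, Finset.mem_singleton_self _, ?_⟩
      have h1 : (5:ℝ) ^ ρmax ≤ 5 ^ r := h5mono (by omega)
      have h2 := hdiam j j₀
      have h3 := h5pos r
      linarith [hρmax.1]
  set parent : V × ℤ → V × ℤ := fun u =>
    if ρmax ≤ u.2 then (j₀, ρmax)
    else if h : ∃ q ∈ N (u.2 + 1), dist u.1 q ≤ 4 * 5 ^ (u.2 + 1) then (h.choose, u.2 + 1)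
    else (j₀, u.2 + 1) with hpardef
  have hroot : ∀ p : V, ∀ r : ℤ, ρmax ≤ r → parent (p, r) = (j₀, ρmax) := by
    intro p r hr
    simp only [hpardef, if_pos hr]
  have hrootfix : parent (j₀, ρmax) = (j₀, ρmax) := hroot j₀ ρmax le_rfl
  have hstep : ∀ p : V, ∀ r : ℤ, p ∈ N r → r < ρmax →
      (parent (p, r)).2 = r + 1 ∧ (parent (p, r)).1 ∈ N (r + 1) ∧
      dist p (parent (p, r)).1 ≤ 4 * 5 ^ (r + 1) := by
    intro p r hp hr
    have hex : ∃ q ∈ N (r + 1), dist p q ≤ 4 * 5 ^ (r + 1) := by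
      apply hNcov (r + 1) p (hNsubF r hp)
      exact (hNf r p hp).trans (h5mono (by omega))
    have hpar : parent (p, r) = (hex.choose, r + 1) := by
      simp only [hpardef, if_neg (not_le.2 hr), dif_pos hex]
    rw [hpar]
    exact ⟨rfl, hex.choose_spec.1, hex.choose_spec.2⟩
  have hchain : ∀ (k : ℕ) (p : V) (r : ℤ), p ∈ N r → ρmin ≤ r → r ≤ ρmax →
      (parent^[k] (p, r)).1 ∈ N ((parent^[k] (p, r)).2) ∧
      (parent^[k] (p, r)).2 = min (r + k) ρmax ∧
      dist p ((parent^[k] (p, r)).1) ≤ 5 * 5 ^ ((parent^[k] (p, r)).2) - 5 * 5 ^ r := by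
    intro k
    induction k with
    | zero =>
      intro p r hp h1 h2
      simp only [Function.iterate_zero, id_eq]
      refine ⟨hp, by omega, by simp⟩
    | succ k ih =>
      intro p r hp h1 h2
      obtain ⟨ha, hb, hc⟩ := ih p r hp h1 h2
      rw [Function.iterate_succ_apply']
      set w := parent^[k] (p, r) with hw
      by_cases hweq : w.2 = ρmax
      · have hw1 : w.1 = j₀ := by
          have := ha
          rw [hweq, hNtop ρmax le_rfl, Finset.mem_singleton] at this
          exact this
        have hwp : w = (j₀, ρmax) := Prod.ext hw1 hweq
        rw [hwp, hrootfix]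
        refine ⟨hj₀N, by omega, ?_⟩
        have := hc
        rw [hw1, hweq] at this
        simpa using this
      · have hwlt : w.2 < ρmax := by omega
        have hwmk : (w.1, w.2) = w := rfl
        obtain ⟨h1', h2', h3'⟩ := hstep w.1 w.2 ha hwlt
        rw [hwmk] at h1' h2' h3'
        have hble : w.2 = r + k := by omega
        refine ⟨by rw [h1']; exact h2', by rw [h1']; push_cast; omega, ?_⟩
        have htri := dist_triangle p w.1 ((parent w).1)
        have h5s : (5:ℝ) ^ (w.2 + 1) = 5 * 5 ^ (w.2) := h5succ w.2
        rw [h1']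
        have h5s2 : (5:ℝ) ^ (w.2 + 1) = 5 * 5 ^ (w.2) := h5s
        linarith
  have hchain' : ∀ (k : ℕ) (u : V × ℤ), u.1 ∈ N u.2 → ρmin ≤ u.2 → u.2 ≤ ρmax →
      (parent^[k] u).1 ∈ N ((parent^[k] u).2) ∧
      (parent^[k] u).2 = min (u.2 + k) ρmax ∧
      dist u.1 ((parent^[k] u).1) ≤ 5 * 5 ^ ((parent^[k] u).2) - 5 * 5 ^ u.2 := by
    intro k u
    have : u = (u.1, u.2) := rfl
    rw [this]
    exact hchain k u.1 u.2
  set P : Finset (V × ℤ) :=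
    (Finset.Icc ρmin ρmax).biUnion (fun r => (N r).image (fun p => (p, r))) with hPdef
  have hPmem : ∀ u : V × ℤ, u ∈ P ↔ (ρmin ≤ u.2 ∧ u.2 ≤ ρmax ∧ u.1 ∈ N u.2) := by
    rintro ⟨p, r⟩
    simp only [hPdef, Finset.mem_biUnion, Finset.mem_Icc, Finset.mem_image, Prod.mk.injEq]
    constructor
    · rintro ⟨r', ⟨ha, hb⟩, p', hp', rfl, rfl⟩
      exact ⟨ha, hb, hp'⟩
    · rintro ⟨ha, hb, hc⟩
      exact ⟨r, ⟨ha, hb⟩, p, hc, rfl, rfl⟩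
  have hPtop : ∀ u ∈ P, u.2 = ρmax → u = (j₀, ρmax) := by
    intro u hu h2
    obtain ⟨_, _, h3⟩ := (hPmem u).1 hu
    rw [h2, hNtop ρmax le_rfl, Finset.mem_singleton] at h3
    exact Prod.ext h3 h2
  have hrootP : (j₀, ρmax) ∈ P := (hPmem _).2 ⟨by simpa using hρ, by simp, by simpa using hj₀N⟩
  have hβex : ∀ x : V, ∃ u : V × ℤ, u.1 ∈ N u.2 ∧ ρmin ≤ u.2 ∧ u.2 ≤ ρmax ∧
      dist x u.1 ≤ 5 * 5 ^ u.2 ∧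
      ∀ r : ℤ, ρmin ≤ r → r ≤ ρmax → (∃ p ∈ N r, dist x p ≤ 5 * 5 ^ r) → u.2 ≤ r := by
    intro x
    set L : Finset ℤ :=
      (Finset.Icc ρmin ρmax).filter (fun r => ∃ p ∈ N r, dist x p ≤ 5 * 5 ^ r) with hLdef
    have hLne : L.Nonempty := by
      refine ⟨ρmax, Finset.mem_filter.2 ⟨Finset.mem_Icc.2 ⟨hρ, le_rfl⟩, ⟨j₀, hj₀N, ?_⟩⟩⟩
      have := hdiam x j₀
      have := h5pos ρmax
      linarith [hρmax.1]
    set l := L.min' hLne with hldef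
    have hlL : l ∈ L := Finset.min'_mem _ _
    rw [hLdef, Finset.mem_filter, Finset.mem_Icc] at hlL
    obtain ⟨⟨ha, hb⟩, p, hp, hd⟩ := hlL
    refine ⟨(p, l), hp, ha, hb, hd, ?_⟩
    intro r h1 h2 h3
    exact Finset.min'_le L r (Finset.mem_filter.2 ⟨Finset.mem_Icc.2 ⟨h1, h2⟩, h3⟩)
  choose β hβ1 hβ2 hβ3 hβ4 hβ5 using hβex
  set A : V × ℤ → Set V := fun u => {x | ∃ k : ℕ, parent^[k] (β x) = u} with hAdef
  have hAmono : ∀ u : V × ℤ, A u ⊆ A (parent u) := by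
    rintro u x ⟨k, hk⟩
    exact ⟨k + 1, by rw [Function.iterate_succ_apply', hk]⟩
  have hAmono' : ∀ (m : ℕ) (u : V × ℤ), A u ⊆ A (parent^[m] u) := by
    rintro m u x ⟨k, hk⟩
    refine ⟨m + k, ?_⟩
    rw [Function.iterate_add_apply, hk]
  have hAanc : ∀ (u v : V × ℤ) (x : V), x ∈ A u → x ∈ A v →
      (∃ m : ℕ, parent^[m] u = v) ∨ (∃ m : ℕ, parent^[m] v = u) := by
    rintro u v x ⟨k, hk⟩ ⟨m, hm⟩
    rcases le_total k m with h | h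
    · left
      refine ⟨m - k, ?_⟩
      rw [← hk, ← Function.iterate_add_apply, Nat.sub_add_cancel h, hm]
    · right
      refine ⟨k - m, ?_⟩
      rw [← hm, ← Function.iterate_add_apply, Nat.sub_add_cancel h, hk]
  have hAball : ∀ (u : V × ℤ) (x : V), x ∈ A u → dist x u.1 ≤ 5 * 5 ^ u.2 := by
    rintro u x ⟨k, hk⟩
    obtain ⟨_, _, hc⟩ := hchain' k (β x) (hβ1 x) (hβ2 x) (hβ3 x)
    rw [hk] at hc
    have h1 := hβ4 x
    have h2 := dist_triangle x (β x).1 u.1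
    linarith
  refine ⟨P, j₀, parent, A, ?_, hrootP, hrootfix, ?_, ?_, ?_, ?_, ?_, ?_, ?_, ?_⟩
  · -- B1
    intro u hu
    obtain ⟨h1, h2, h3⟩ := (hPmem u).1 hu
    exact ⟨hNsubF _ h3, h1, h2⟩
  · -- B4 non-root structure
    intro u hu hne
    obtain ⟨h1, h2, h3⟩ := (hPmem u).1 hu
    have hlt : u.2 < ρmax := by
      rcases lt_or_eq_of_le h2 with h | h
      · exact h
      · exact absurd (hPtop u hu h) hne
    obtain ⟨ha, hb2, hc⟩ := hstep u.1 u.2 h3 hlt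
    simp only [Prod.mk.eta] at ha hb2 hc
    refine ⟨(hPmem _).2 ⟨by omega, by omega, by rw [ha]; exact hb2⟩, ha, ?_⟩
    intro x hx
    rw [mem_closedBall] at hx ⊢
    rw [ha]
    have ht := dist_triangle x u.1 ((parent u).1)
    have he := h5succ u.2
    have hp := h5pos u.2
    linarith
  · -- B5 height
    intro u hu
    obtain ⟨h1, h2, h3⟩ := (hPmem u).1 hu
    refine ⟨(ρmax - u.2).toNat, by omega, ?_⟩
    obtain ⟨ca, cb, _⟩ := hchain' ((ρmax - u.2).toNat) u h3 h1 h2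
    have hlev : (parent^[(ρmax - u.2).toNat] u).2 = ρmax := by omega
    exact hPtop _ ((hPmem _).2 ⟨by omega, by omega, ca⟩) hlev
  · -- B6 degree
    intro u hu
    obtain ⟨h1, h2, h3⟩ := (hPmem u).1 hu
    set T : Finset V := (N (u.2 - 1)).filter (fun q => dist q u.1 ≤ 4 * 5 ^ u.2) with hTdef
    set D : Finset (V × ℤ) := T.image (fun q => (q, u.2 - 1)) with hDdef
    have hsub : {w : V × ℤ | w ∈ P ∧ w ≠ u ∧ parent w = u} ⊆ ↑D := by
      rintro ⟨q, s⟩ ⟨hwP, hwne, hwpar⟩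
      obtain ⟨g1, g2, g3⟩ := (hPmem _).1 hwP
      have hslt : s < ρmax := by
        rcases lt_or_eq_of_le g2 with h | h
        · exact h
        · have heq := hPtop _ hwP h
          rw [heq, hrootfix] at hwpar
          exact absurd (heq.trans hwpar) hwne
      obtain ⟨ha, hb2, hc⟩ := hstep q s g3 hslt
      rw [hwpar] at ha hb2 hc
      simp only [hDdef, hTdef, Finset.coe_image, Set.mem_image, Finset.mem_coe,
        Finset.mem_filter]
      refine ⟨q, ⟨?_, ?_⟩, ?_⟩
      · have : u.2 - 1 = s := by omega
        rw [this]; exact g3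
      · have : u.2 = s + 1 := by omega
        rw [this]; exact hc
      · have : u.2 - 1 = s := by omega
        rw [this]
    have hTcard : T.card ≤ 2 ^ (4 * κ) := by
      apply packing hdoub 4 u.1 (4 * 5 ^ u.2) (by positivity)
      · intro p hp
        exact (Finset.mem_filter.1 hp).2
      · intro p hp q hq hpq
        have hd := hNsep (u.2 - 1) p (Finset.mem_filter.1 hp).1 q (Finset.mem_filter.1 hq).1 hpq
        have he : (5:ℝ) ^ u.2 = 5 * 5 ^ (u.2 - 1) := by
          rw [← h5succ (u.2 - 1)]
          congr 1
          ring
        have hp5 := h5pos (u.2 - 1)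
        rw [he]
        norm_num
        linarith
    calc {w : V × ℤ | w ∈ P ∧ w ≠ u ∧ parent w = u}.ncard
        ≤ (↑D : Set (V × ℤ)).ncard := Set.ncard_le_ncard hsub D.finite_toSet
      _ = D.card := Set.ncard_coe_finset D
      _ ≤ T.card := Finset.card_image_le
      _ ≤ 2 ^ (4 * κ) := hTcard
  · -- B7 areas in balls
    intro u hu x hx
    rw [mem_closedBall]
    have := hAball u x hx
    have := h5pos u.2
    linarith
  · -- B8 monotone
    intro u _
    exact hAmono u
  · -- B9 disjoint unless related
    intro u hu v hv hnvu hnuv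
    rw [Set.eq_empty_iff_forall_notMem]
    rintro x ⟨hxu, hxv⟩
    rcases hAanc u v x hxu hxv with h | h
    · exact hnuv h
    · exact hnvu h
  · -- B10 laminar
    intro u hu v hv
    by_cases hd : A u ∩ A v = ∅
    · exact Or.inl hd
    · obtain ⟨x, hxu, hxv⟩ := Set.nonempty_iff_ne_empty.2 hd
      rcases hAanc u v x hxu hxv with ⟨m, hm⟩ | ⟨m, hm⟩
      · exact Or.inr (Or.inl (hm ▸ hAmono' m u))
      · exact Or.inr (Or.inr (hm ▸ hAmono' m v))
  · -- B11 covering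
    intro C 𝔅 h𝔅 hC
    set rb : V × ℝ → ℤ := fun b => min ρmax ⌈Real.logb 5 (max b.2 (f b.1))⌉ with hrbdef
    have hrb_eq : ∀ b : V × ℝ, rb b = min ρmax ⌈Real.logb 5 (max b.2 (f b.1))⌉ :=
      fun b => by rw [hrbdef]
    have hrbfacts : ∀ b ∈ 𝔅, ρmin ≤ rb b ∧ rb b ≤ ρmax ∧
        (5:ℝ) ^ (rb b) < 5 * max b.2 (f b.1) ∧
        (rb b < ρmax → max b.2 (f b.1) ≤ 5 ^ (rb b)) := by
      intro b hb
      obtain ⟨hbF, hbR⟩ := h𝔅 b hb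
      have hMpos : 0 < max b.2 (f b.1) := lt_of_lt_of_le (hf b.1 hbF) (le_max_right _ _)
      have hMle := le_zpow_ceil_logb (max b.2 (f b.1)) hMpos
      have hceil_ge : ρmin ≤ ⌈Real.logb 5 (max b.2 (f b.1))⌉ := by
        by_contra hcon
        push_neg at hcon
        have ha : (5:ℝ) ^ (⌈Real.logb 5 (max b.2 (f b.1))⌉) ≤ 5 ^ (ρmin - 1) :=
          h5mono (by omega)
        have hb2 : (5:ℝ) ^ ρmin ≤ max b.2 (f b.1) :=
          le_trans hρmin.1 (le_trans (hfminle b.1 hbF) (le_max_right _ _))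
        have hc : (5:ℝ) ^ ρmin = 5 * 5 ^ (ρmin - 1) := by
          rw [← h5succ (ρmin - 1)]
          congr 1
          ring
        have := h5pos (ρmin - 1)
        linarith
      have h1 : ρmin ≤ rb b := by rw [hrb_eq]; omega
      have h2 : rb b ≤ ρmax := by rw [hrb_eq]; exact min_le_left _ _
      refine ⟨h1, h2, ?_, ?_⟩
      · by_cases hmin : ⌈Real.logb 5 (max b.2 (f b.1))⌉ ≤ ρmax
        · have : rb b = ⌈Real.logb 5 (max b.2 (f b.1))⌉ := by rw [hrb_eq]; omega
          rw [this]
          have hlt := zpow_lt_of_lt_ceil hMpos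
            (show ⌈Real.logb 5 (max b.2 (f b.1))⌉ - 1 < ⌈Real.logb 5 (max b.2 (f b.1))⌉ by omega)
          have he : (5:ℝ) ^ (⌈Real.logb 5 (max b.2 (f b.1))⌉) =
              5 * 5 ^ (⌈Real.logb 5 (max b.2 (f b.1))⌉ - 1) := by
            rw [← h5succ]
            congr 1
            ring
          linarith
        · have : rb b = ρmax := by rw [hrb_eq]; omega
          rw [this]
          have hlt := zpow_lt_of_lt_ceil hMpos (show ρmax < ⌈Real.logb 5 (max b.2 (f b.1))⌉ by omega)
          linarith
      · intro hlt
        have : rb b = ⌈Real.logb 5 (max b.2 (f b.1))⌉ := by rw [hrb_eq] at hlt ⊢; omega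
        rw [this]
        exact hMle
    set SB : V × ℝ → Finset (V × ℤ) := fun b =>
      ((N (rb b)).filter (fun p => dist p b.1 ≤ 6 * 5 ^ (rb b))).image
        (fun p => (p, rb b)) with hSBdef
    refine ⟨𝔅.biUnion SB, ?_, ?_, ?_⟩
    · -- subset of P
      intro u hu
      obtain ⟨b, hb, hub⟩ := Finset.mem_biUnion.1 hu
      simp only [hSBdef, Finset.mem_image, Finset.mem_filter] at hub
      obtain ⟨p, ⟨hp, _⟩, rfl⟩ := hub
      obtain ⟨g1, g2, _, _⟩ := hrbfacts b hb
      exact (hPmem _).2 ⟨g1, g2, hp⟩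
    · -- coverage
      intro x hxC
      obtain ⟨b, hb, hxb⟩ := Set.mem_iUnion₂.1 (hC hxC)
      obtain ⟨hbF, hbR⟩ := h𝔅 b hb
      obtain ⟨g1, g2, g3, g4⟩ := hrbfacts b hb
      have hxb' : dist x b.1 ≤ b.2 := mem_closedBall.1 hxb
      have hxW : dist x b.1 ≤ W := hdiam x b.1
      have hdistx : dist x b.1 ≤ 5 ^ (rb b) := by
        rcases lt_or_eq_of_le g2 with h | h
        · exact hxb'.trans (le_trans (le_max_left _ _) (g4 h))
        · rw [h]
          exact hxW.trans hρmax.1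
      have hexrb : ∃ p ∈ N (rb b), dist x p ≤ 5 * 5 ^ (rb b) := by
        rcases lt_or_eq_of_le g2 with h | h
        · obtain ⟨p, hp, hdp⟩ := hNcov (rb b) b.1 hbF
            (le_trans (le_trans (le_max_right _ _) (g4 h)) (h5mono (by omega)))
          refine ⟨p, hp, ?_⟩
          have := dist_triangle x b.1 p
          linarith
        · refine ⟨j₀, by rw [h]; exact hj₀N, ?_⟩
          have := hdiam x j₀
          have := h5pos ρmax
          rw [h]
          linarith [hρmax.1]
      have hle : (β x).2 ≤ rb b := hβ5 x (rb b) g1 g2 hexrb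
      set k := (rb b - (β x).2).toNat with hkdef
      obtain ⟨ca, cb, cc⟩ := hchain' k (β x) (hβ1 x) (hβ2 x) (hβ3 x)
      have hlev : (parent^[k] (β x)).2 = rb b := by omega
      refine Set.mem_iUnion₂.2 ⟨parent^[k] (β x), ?_, ⟨k, rfl⟩⟩
      apply Finset.mem_biUnion.2
      refine ⟨b, hb, ?_⟩
      simp only [hSBdef, Finset.mem_image, Finset.mem_filter]
      refine ⟨(parent^[k] (β x)).1, ⟨?_, ?_⟩, ?_⟩
      · rw [← hlev]
        exact ca
      · have t1 := hβ4 x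
        have t2 := cc
        rw [hlev] at t2
        have u1 : dist ((parent^[k] (β x)).1) b.1 ≤
            dist ((parent^[k] (β x)).1) x + dist x b.1 := dist_triangle _ _ _
        have u2 : dist ((parent^[k] (β x)).1) x ≤
            dist ((parent^[k] (β x)).1) ((β x).1) + dist ((β x).1) x := dist_triangle _ _ _
        have u3 : dist ((parent^[k] (β x)).1) ((β x).1) = dist ((β x).1) ((parent^[k] (β x)).1) :=
          dist_comm _ _
        have u4 : dist ((β x).1) x = dist x ((β x).1) := dist_comm _ _
        linarith
      · exact Prod.ext rfl hlev.symm
    · -- cost bound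
      have hgnn : ∀ b ∈ 𝔅, ∀ u ∈ SB b, (0:ℝ) ≤ f u.1 + 7 * 5 ^ u.2 := by
        intro b hb u hu
        simp only [hSBdef, Finset.mem_image, Finset.mem_filter] at hu
        obtain ⟨p, ⟨hp, _⟩, rfl⟩ := hu
        have hpF := hNsubF _ hp
        have := hf p hpF
        have := h5pos (rb b)
        show (0:ℝ) ≤ f p + 7 * 5 ^ (rb b)
        linarith
      calc ∑ u ∈ 𝔅.biUnion SB, (f u.1 + 7 * 5 ^ u.2)
          ≤ ∑ b ∈ 𝔅, ∑ u ∈ SB b, (f u.1 + 7 * 5 ^ u.2) := sum_biUnion_le' 𝔅 SB _ hgnn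
        _ ≤ ∑ b ∈ 𝔅, (80 * 2 ^ (2 * κ) * (f b.1 + b.2)) := by
            apply Finset.sum_le_sum
            intro b hb
            obtain ⟨hbF, hbR⟩ := h𝔅 b hb
            obtain ⟨g1, g2, g3, _⟩ := hrbfacts b hb
            have hcard : ((N (rb b)).filter (fun p => dist p b.1 ≤ 6 * 5 ^ (rb b))).card ≤
                2 ^ (2 * κ) := by
              apply packing hdoub 2 b.1 (6 * 5 ^ (rb b)) (by positivity)
              · intro p hp
                exact (Finset.mem_filter.1 hp).2
              · intro p hp q hq hpq
                have hd := hNsep (rb b) p (Finset.mem_filter.1 hp).1 q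
                  (Finset.mem_filter.1 hq).1 hpq
                have := h5pos (rb b)
                norm_num
                linarith
            have hterm : ∀ u ∈ SB b, f u.1 + 7 * 5 ^ u.2 ≤ 12 * 5 ^ (rb b) := by
              intro u hu
              simp only [hSBdef, Finset.mem_image, Finset.mem_filter] at hu
              obtain ⟨p, ⟨hp, _⟩, rfl⟩ := hu
              have hfp := hNf (rb b) p hp
              have he := h5succ (rb b)
              show f p + 7 * 5 ^ (rb b) ≤ 12 * 5 ^ (rb b)
              linarith
            have hM : max b.2 (f b.1) ≤ f b.1 + b.2 :=
              max_le (by linarith [hf b.1 hbF]) (by linarith)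
            calc ∑ u ∈ SB b, (f u.1 + 7 * 5 ^ u.2)
                ≤ (SB b).card • (12 * 5 ^ (rb b)) := Finset.sum_le_card_nsmul _ _ _ hterm
              _ = ((SB b).card : ℝ) * (12 * 5 ^ (rb b)) := by rw [nsmul_eq_mul]
              _ ≤ 2 ^ (2 * κ) * (12 * 5 ^ (rb b)) := by
                  apply mul_le_mul_of_nonneg_right _ (by positivity)
                  calc ((SB b).card : ℝ)
                      ≤ (((N (rb b)).filter (fun p => dist p b.1 ≤ 6 * 5 ^ (rb b))).card : ℝ) := by
                        exact_mod_cast Finset.card_image_le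
                    _ ≤ ((2 ^ (2 * κ) : ℕ) : ℝ) := by exact_mod_cast hcard
                    _ = 2 ^ (2 * κ) := by push_cast; ring
              _ ≤ 80 * 2 ^ (2 * κ) * (f b.1 + b.2) := by
                  have h2nn : (0:ℝ) ≤ 2 ^ (2 * κ) := by positivity
                  have hkey : 12 * 5 ^ (rb b) ≤ 80 * (f b.1 + b.2) := by
                    have := hf b.1 hbF
                    nlinarith [g3, hM]
                  nlinarith [hkey, h2nn]
        _ = 80 * 2 ^ (2 * κ) * ∑ b ∈ 𝔅, (f b.1 + b.2) := by rw [Finset.mul_sum]
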